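/- For every ε > 0 there exists N ∈ ℕ such that every vector v = (v_1,…,v_n) of integers with v_k ≥ N for all k and density d(v) = ∑_{k=1}^n 1/v_k < 1 − ε admits a Pinwheel schedule. -/

import Mathlib

namespace PinwheelProof

/-- binary reversal of the lowest `d` bits. -/
def rev : ℕ → ℕ → ℕ
  | 0, _ => 0
  | (d+1), a => (a % 2) * 2^d + rev d (a / 2)

lemma rev_lt : ∀ d a, rev d a < 2 ^ d := by
  intro d
  induction d with
  | zero => intro a; simp [rev]
  | succ d ih =>
    intro a
    have h1 : a % 2 * 2 ^ d ≤ 2 ^ d := by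
      have : a % 2 ≤ 1 := Nat.le_of_lt_succ (Nat.mod_lt _ (by norm_num))
      exact Nat.mul_le_mul_right _ this |>.trans (by simp)
    have h2 := ih (a / 2)
    have h3 : rev (d+1) a = a % 2 * 2 ^ d + rev d (a / 2) := rfl
    rw [h3, pow_succ]
    omega

lemma rev_mod (d e : ℕ) : ∀ a, rev (d + e) a % 2 ^ d = rev d (a / 2 ^ e) := by
  induction e with
  | zero =>
    intro a
    simp [Nat.mod_eq_of_lt (rev_lt d a)]
  | succ e ih =>
    intro a
    have h1 : rev (d + (e+1)) a = a % 2 * 2 ^ (d + e) + rev (d + e) (a / 2) := rfl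
    rw [h1]
    have hdvd : 2 ^ d ∣ a % 2 * 2 ^ (d + e) :=
      Dvd.dvd.mul_left (pow_dvd_pow 2 (Nat.le_add_right d e)) _
    have hz : a % 2 * 2 ^ (d + e) % 2 ^ d = 0 := Nat.eq_zero_of_dvd_of_lt hdvd |> fun _ => Nat.mod_eq_zero_of_dvd hdvd
    rw [Nat.add_mod, hz, zero_add, Nat.mod_mod_of_dvd _ dvd_rfl, ih,
      Nat.div_div_eq_div_mul, ← pow_succ']

lemma rev_inj (d : ℕ) : ∀ a b, a < 2 ^ d → b < 2 ^ d → rev d a = rev d b → a = b := by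
  induction d with
  | zero => intro a b ha hb _; omega
  | succ d ih =>
    intro a b ha hb h
    have h1 : rev (d+1) a = a % 2 * 2 ^ d + rev d (a / 2) := rfl
    have h2 : rev (d+1) b = b % 2 * 2 ^ d + rev d (b / 2) := rfl
    have hra := rev_lt d (a / 2)
    have hrb := rev_lt d (b / 2)
    have ha2 : a % 2 < 2 := Nat.mod_lt _ (by norm_num)
    have hb2 : b % 2 < 2 := Nat.mod_lt _ (by norm_num)
    have hm : a % 2 = b % 2 := by
      rw [h1, h2] at h
      obtain h'|h' : a % 2 = 0 ∨ a % 2 = 1 := by omega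
      all_goals obtain h''|h'' : b % 2 = 0 ∨ b % 2 = 1 := by omega
      all_goals rw [h', h''] at h
      all_goals simp at h
      all_goals omega
    have hrest : rev d (a / 2) = rev d (b / 2) := by
      rw [h1, h2, hm] at h; omega
    have hda : a / 2 < 2 ^ d := by rw [pow_succ] at ha; omega
    have hdb : b / 2 < 2 ^ d := by rw [pow_succ] at hb; omega
    have := ih _ _ hda hdb hrest
    omega


/-- largest d with T * 2^d ≤ x -/
def dep (T x : ℕ) : ℕ := Nat.findGreatest (fun d => T * 2 ^ d ≤ x) x

lemma dep_spec {T x : ℕ} (hx : T ≤ x) : T * 2 ^ dep T x ≤ x := by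
  apply Nat.findGreatest_spec (P := fun d => T * 2 ^ d ≤ x) (Nat.zero_le x)
  simpa using hx

lemma dep_max {T x : ℕ} (hT : 1 ≤ T) (hx : T ≤ x) : x < T * 2 ^ (dep T x + 1) := by
  by_contra hc
  push_neg at hc
  have h2 : 2 ^ (dep T x + 1) ≤ x := le_trans (by nlinarith [pow_pos (show 0<2 by norm_num) (dep T x + 1)]) hc
  have hle : dep T x + 1 ≤ x := le_trans (Nat.lt_two_pow_self (n := dep T x + 1)).le h2
  exact Nat.findGreatest_is_greatest (Nat.lt_succ_self _) hle hc

def mm (T x : ℕ) : ℕ := x / 2 ^ dep T x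

lemma mm_le {T x : ℕ} (hx : T ≤ x) : T ≤ mm T x :=
  (Nat.le_div_iff_mul_le (pow_pos (by norm_num : (0:ℕ) < 2) _)).2 (dep_spec hx)

lemma mm_lt {T x : ℕ} (hT : 1 ≤ T) (hx : T ≤ x) : mm T x < 2 * T := by
  have h := dep_max hT hx
  apply Nat.div_lt_of_lt_mul
  calc x < T * 2 ^ (dep T x + 1) := h
    _ = 2 ^ dep T x * (2 * T) := by ring

lemma mm_mul_le {T x : ℕ} : mm T x * 2 ^ dep T x ≤ x := Nat.div_mul_le_self _ _

lemma lt_mm_succ {T x : ℕ} : x < (mm T x + 1) * 2 ^ dep T x := by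
  have h := Nat.div_add_mod x (2 ^ dep T x)
  have hmod : x % 2 ^ dep T x < 2 ^ dep T x := Nat.mod_lt _ (pow_pos (by norm_num : (0:ℕ) < 2) _)
  unfold mm
  rw [add_mul, one_mul, mul_comm]
  omega

/-- ceiling division fact -/
lemma le_ceil_mul {nn m : ℕ} (hm : 0 < m) : nn ≤ (nn + m - 1) / m * m := by
  have h := Nat.div_add_mod (nn + m - 1) m
  have h2 : (nn + m - 1) % m ≤ m - 1 := Nat.le_pred_of_lt (Nat.mod_lt _ hm)
  rw [mul_comm]
  omega


section Main

variable (T : ℕ) {n : ℕ} (v : Fin n → ℕ)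

def grp (k : Fin n) : ℕ × ℕ := (dep T (v k), mm T (v k))
def cnt (p : ℕ × ℕ) : ℕ := (Finset.univ.filter fun k => grp T v k = p).card
def nu (p : ℕ × ℕ) : ℕ := (cnt T v p + p.2 - 1) / p.2
def nud (d : ℕ) : ℕ := ∑ m ∈ Finset.Ico T (2*T), nu T v (d, m)
def Pd (d : ℕ) : ℕ := ∑ d' ∈ Finset.range d, nud T v d' * 2 ^ (d - d')
def off (d m : ℕ) : ℕ := ∑ m' ∈ Finset.Ico T m, nu T v (d, m')
def qq (k : Fin n) : ℕ := (Finset.univ.filter fun l => grp T v l = grp T v k ∧ l < k).card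
def aa (k : Fin n) : ℕ :=
  Pd T v (grp T v k).1 + (off T v (grp T v k).1 (grp T v k).2 + qq T v k / (grp T v k).2)
def oo (k : Fin n) : ℕ :=
  rev (grp T v k).1 (aa T v k) + (qq T v k % (grp T v k).2) * 2 ^ (grp T v k).1
def per (k : Fin n) : ℕ := (grp T v k).2 * 2 ^ (grp T v k).1

variable {T v}

lemma grpm_pos (hT : 2 ≤ T) (hv : ∀ k, T ≤ v k) (k : Fin n) : 0 < (grp T v k).2 :=
  lt_of_lt_of_le (by omega) (mm_le (hv k))

lemma qq_lt_cnt (k : Fin n) : qq T v k < cnt T v (grp T v k) := by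
  apply Finset.card_lt_card
  constructor
  · intro l hl
    simp only [Finset.mem_filter] at *
    exact ⟨hl.1, hl.2.1⟩
  · intro hsub
    have hk : k ∈ Finset.univ.filter fun l => grp T v l = grp T v k := by simp
    have := hsub hk
    simp at this

lemma qq_mono {k l : Fin n} (hkl : k < l) (hg : grp T v k = grp T v l) :
    qq T v k < qq T v l := by
  apply Finset.card_lt_card
  constructor
  · intro l' hl'
    simp only [Finset.mem_filter] at hl' ⊢
    exact ⟨Finset.mem_univ _, by rw [hl'.2.1, hg], hl'.2.2.trans hkl⟩
  · intro hsub
    have hk : k ∈ Finset.univ.filter fun l' => grp T v l' = grp T v l ∧ l' < l := by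
      simp [hg, hkl]
    have := hsub hk
    simp at this

lemma jj_lt_nu (hT : 2 ≤ T) (hv : ∀ k, T ≤ v k) (k : Fin n) :
    qq T v k / (grp T v k).2 < nu T v (grp T v k) := by
  have h1 := qq_lt_cnt (T := T) (v := v) (k := k)
  have h2 : cnt T v (grp T v k) ≤ nu T v (grp T v k) * (grp T v k).2 :=
    le_ceil_mul (grpm_pos hT hv k)
  rw [mul_comm] at h2
  exact Nat.div_lt_of_lt_mul (lt_of_lt_of_le h1 h2)

lemma off_add_nu_le_off {d m1 m2 : ℕ} (hm1 : T ≤ m1) (hle : m1 < m2) :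
    off T v d m1 + nu T v (d, m1) ≤ off T v d m2 := by
  have h1 : off T v d m1 + nu T v (d, m1)
      = ∑ m' ∈ Finset.Ico T (m1 + 1), nu T v (d, m') := by
    rw [off, Finset.sum_Ico_succ_top hm1]
  rw [h1, off]
  apply Finset.sum_le_sum_of_subset
  apply Finset.Ico_subset_Ico le_rfl
  omega

lemma off_add_nu_le (hT : 2 ≤ T) (hv : ∀ k, T ≤ v k) (k : Fin n) :
    off T v (grp T v k).1 (grp T v k).2 + nu T v (grp T v k) ≤ nud T v (grp T v k).1 := by
  have hmT : T ≤ (grp T v k).2 := mm_le (hv k)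
  have hm2T : (grp T v k).2 < 2 * T := mm_lt (by omega) (hv k)
  have h1 : off T v (grp T v k).1 (grp T v k).2 + nu T v (grp T v k)
      = ∑ m' ∈ Finset.Ico T ((grp T v k).2 + 1), nu T v ((grp T v k).1, m') := by
    rw [off, Finset.sum_Ico_succ_top hmT]
  rw [h1, nud]
  apply Finset.sum_le_sum_of_subset
  apply Finset.Ico_subset_Ico le_rfl
  omega

lemma aa_lt (hT : 2 ≤ T) (hv : ∀ k, T ≤ v k)
    (hcap : ∀ d, Pd T v d + nud T v d ≤ 2 ^ d) (k : Fin n) :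
    aa T v k < 2 ^ (grp T v k).1 := by
  have h1 := jj_lt_nu hT hv k
  have h2 := off_add_nu_le hT hv k
  have h3 := hcap (grp T v k).1
  unfold aa
  omega

lemma Pd_cross {d1 d2 : ℕ} (h : d1 < d2) :
    (Pd T v d1 + nud T v d1) * 2 ^ (d2 - d1) ≤ Pd T v d2 := by
  have hsub : Finset.range (d1+1) ⊆ Finset.range d2 := by
    intro x hx; simp at *; omega
  have hstep : ∀ d' ∈ Finset.range (d1+1),
      nud T v d' * 2 ^ (d1 - d') * 2 ^ (d2 - d1) = nud T v d' * 2 ^ (d2 - d') := by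
    intro d' hd'
    simp only [Finset.mem_range] at hd'
    rw [mul_assoc, ← pow_add]
    congr 2
    omega
  calc (Pd T v d1 + nud T v d1) * 2 ^ (d2 - d1)
      = (∑ d' ∈ Finset.range (d1+1), nud T v d' * 2 ^ (d1 - d')) * 2 ^ (d2 - d1) := by
        rw [Pd, Finset.sum_range_succ]; simp
    _ = ∑ d' ∈ Finset.range (d1+1), nud T v d' * 2 ^ (d2 - d') := by
        rw [Finset.sum_mul]; exact Finset.sum_congr rfl hstep
    _ ≤ ∑ d' ∈ Finset.range d2, nud T v d' * 2 ^ (d2 - d') :=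
        Finset.sum_le_sum_of_subset hsub
    _ = Pd T v d2 := rfl

lemma aa_cross (hT : 2 ≤ T) (hv : ∀ k, T ≤ v k) {k l : Fin n}
    (h : (grp T v k).1 < (grp T v l).1) :
    (aa T v k + 1) * 2 ^ ((grp T v l).1 - (grp T v k).1) ≤ aa T v l := by
  have h1 : aa T v k + 1 ≤ Pd T v (grp T v k).1 + nud T v (grp T v k).1 := by
    have h2 := jj_lt_nu hT hv k
    have h3 := off_add_nu_le hT hv k
    unfold aa; omega
  calc (aa T v k + 1) * 2 ^ ((grp T v l).1 - (grp T v k).1)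
      ≤ (Pd T v (grp T v k).1 + nud T v (grp T v k).1) * 2 ^ ((grp T v l).1 - (grp T v k).1) :=
        Nat.mul_le_mul_right _ h1
    _ ≤ Pd T v (grp T v l).1 := Pd_cross h
    _ ≤ aa T v l := Nat.le_add_right _ _

lemma aa_ne_same_depth (hT : 2 ≤ T) (hv : ∀ k, T ≤ v k) {k l : Fin n} (hne : k ≠ l)
    (hd : (grp T v k).1 = (grp T v l).1)
    (hii : qq T v k % (grp T v k).2 = qq T v l % (grp T v l).2) : aa T v k ≠ aa T v l := by
  rcases lt_trichotomy (grp T v k).2 (grp T v l).2 with hm | hm | hm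
  · apply ne_of_lt
    have hoff : off T v (grp T v k).1 (grp T v k).2 + nu T v ((grp T v k).1, (grp T v k).2)
        ≤ off T v (grp T v k).1 (grp T v l).2 := off_add_nu_le_off (mm_le (hv k)) hm
    rw [Prod.mk.eta] at hoff
    have hjk := jj_lt_nu hT hv k
    unfold aa
    rw [← hd]
    apply Nat.add_lt_add_left
    calc off T v (grp T v k).1 (grp T v k).2 + qq T v k / (grp T v k).2
        < off T v (grp T v k).1 (grp T v k).2 + nu T v (grp T v k) :=
          Nat.add_lt_add_left hjk _
      _ ≤ off T v (grp T v k).1 (grp T v l).2 := hoff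
      _ ≤ off T v (grp T v k).1 (grp T v l).2 + qq T v l / (grp T v l).2 :=
          Nat.le_add_right _ _
  · have hg : grp T v k = grp T v l := Prod.ext hd hm
    intro hcon
    unfold aa at hcon
    rw [hg] at hcon hii
    have hdiv : qq T v k / (grp T v l).2 = qq T v l / (grp T v l).2 := by omega
    have heq : qq T v k = qq T v l := by
      conv_lhs => rw [← Nat.div_add_mod (qq T v k) (grp T v l).2]
      conv_rhs => rw [← Nat.div_add_mod (qq T v l) (grp T v l).2]
      rw [hdiv, hii]
    rcases lt_or_gt_of_ne hne with h' | h'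
    · exact (qq_mono h' hg).ne heq
    · exact (qq_mono h' hg.symm).ne heq.symm
  · apply ne_of_gt
    have hoff : off T v (grp T v l).1 (grp T v l).2 + nu T v ((grp T v l).1, (grp T v l).2)
        ≤ off T v (grp T v l).1 (grp T v k).2 := off_add_nu_le_off (mm_le (hv l)) hm
    rw [Prod.mk.eta] at hoff
    have hjl := jj_lt_nu hT hv l
    unfold aa
    rw [hd]
    apply Nat.add_lt_add_left
    calc off T v (grp T v l).1 (grp T v l).2 + qq T v l / (grp T v l).2
        < off T v (grp T v l).1 (grp T v l).2 + nu T v (grp T v l) :=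
          Nat.add_lt_add_left hjl _
      _ ≤ off T v (grp T v l).1 (grp T v k).2 := hoff
      _ ≤ off T v (grp T v l).1 (grp T v k).2 + qq T v k / (grp T v k).2 :=
          Nat.le_add_right _ _

lemma aa_lt_of_m_lt (hT : 2 ≤ T) (hv : ∀ k, T ≤ v k) {k l : Fin n}
    (hd : (grp T v k).1 = (grp T v l).1) (hm : (grp T v k).2 < (grp T v l).2) :
    aa T v k < aa T v l := by
  have hoff : off T v (grp T v k).1 (grp T v k).2 + nu T v ((grp T v k).1, (grp T v k).2)
      ≤ off T v (grp T v k).1 (grp T v l).2 := off_add_nu_le_off (mm_le (hv k)) hm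
  rw [Prod.mk.eta] at hoff
  have hjk := jj_lt_nu hT hv k
  unfold aa
  rw [← hd]
  apply Nat.add_lt_add_left
  calc off T v (grp T v k).1 (grp T v k).2 + qq T v k / (grp T v k).2
      < off T v (grp T v k).1 (grp T v k).2 + nu T v (grp T v k) :=
        Nat.add_lt_add_left hjk _
    _ ≤ off T v (grp T v k).1 (grp T v l).2 := hoff
    _ ≤ off T v (grp T v k).1 (grp T v l).2 + qq T v l / (grp T v l).2 :=
        Nat.le_add_right _ _

lemma qq_inj {k l : Fin n} (hg : grp T v k = grp T v l) (hq : qq T v k = qq T v l) :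
    k = l := by
  by_contra hne
  rcases lt_or_gt_of_ne hne with h' | h'
  · exact (qq_mono h' hg).ne hq
  · exact (qq_mono h' hg.symm).ne hq.symm

lemma oo_lt_per (hT : 2 ≤ T) (hv : ∀ k, T ≤ v k) (k : Fin n) : oo T v k < per T v k := by
  have h1 : rev (grp T v k).1 (aa T v k) < 2 ^ (grp T v k).1 := rev_lt _ _
  have hpos := grpm_pos hT hv k
  have h2 : qq T v k % (grp T v k).2 ≤ (grp T v k).2 - 1 :=
    Nat.le_pred_of_lt (Nat.mod_lt _ hpos)
  have h4 : (qq T v k % (grp T v k).2 + 1) * 2 ^ (grp T v k).1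
      ≤ (grp T v k).2 * 2 ^ (grp T v k).1 :=
    Nat.mul_le_mul_right _ (Nat.succ_le_of_lt (Nat.mod_lt _ hpos))
  rw [oo, per]
  apply lt_of_lt_of_le _ h4
  rw [add_mul, one_mul]
  omega

lemma mem_ap_mod_pow {k : Fin n} {x : ℕ} (hx : x % per T v k = oo T v k) :
    x % 2 ^ (grp T v k).1 = rev (grp T v k).1 (aa T v k) := by
  have hdvd : 2 ^ (grp T v k).1 ∣ per T v k := by
    rw [per]; exact dvd_mul_left _ _
  have h1 : x % 2 ^ (grp T v k).1 = (x % per T v k) % 2 ^ (grp T v k).1 :=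
    (Nat.mod_mod_of_dvd x hdvd).symm
  rw [h1, hx, oo, Nat.add_mul_mod_self_right, Nat.mod_eq_of_lt (rev_lt _ _)]

lemma disj_of_depth_lt (hT : 2 ≤ T) (hv : ∀ k, T ≤ v k)
    (hcap : ∀ d, Pd T v d + nud T v d ≤ 2 ^ d) {k l : Fin n}
    (h : (grp T v k).1 < (grp T v l).1) {x : ℕ}
    (hk : x % per T v k = oo T v k) (hl : x % per T v l = oo T v l) : False := by
  set dk := (grp T v k).1 with hdk
  set dl := (grp T v l).1 with hdl
  have hde : dk + (dl - dk) = dl := by omega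
  have h1 : x % 2 ^ dk = rev dk (aa T v k) := mem_ap_mod_pow hk
  have h2 : x % 2 ^ dl = rev dl (aa T v l) := mem_ap_mod_pow hl
  have h3 : x % 2 ^ dk = (x % 2 ^ dl) % 2 ^ dk :=
    (Nat.mod_mod_of_dvd x (pow_dvd_pow 2 h.le)).symm
  have h4 : rev dl (aa T v l) % 2 ^ dk = rev dk (aa T v l / 2 ^ (dl - dk)) := by
    conv_lhs => rw [← hde]
    exact rev_mod dk (dl - dk) (aa T v l)
  have hcross := aa_cross hT hv (k := k) (l := l) h
  have hlt : aa T v k < aa T v l / 2 ^ (dl - dk) := by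
    have := (Nat.le_div_iff_mul_le (pow_pos (by norm_num : (0:ℕ) < 2) (dl - dk))).2 hcross
    omega
  have hub : aa T v l / 2 ^ (dl - dk) < 2 ^ dk := by
    apply Nat.div_lt_of_lt_mul
    have := aa_lt hT hv hcap l
    rw [← hdl] at this
    calc aa T v l < 2 ^ dl := this
      _ = 2 ^ (dl - dk) * 2 ^ dk := by rw [← pow_add]; congr 1; omega
  have heq : aa T v l / 2 ^ (dl - dk) = aa T v k := by
    apply rev_inj dk _ _ hub (by rw [hdk]; exact aa_lt hT hv hcap k)
    rw [← h4, ← h2, ← h3, h1]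
  omega

lemma disj (hT : 2 ≤ T) (hv : ∀ k, T ≤ v k)
    (hcap : ∀ d, Pd T v d + nud T v d ≤ 2 ^ d) {k l : Fin n} (hne : k ≠ l) {x : ℕ}
    (hk : x % per T v k = oo T v k) (hl : x % per T v l = oo T v l) : False := by
  rcases lt_trichotomy (grp T v k).1 (grp T v l).1 with hd | hd | hd
  · exact disj_of_depth_lt hT hv hcap hd hk hl
  · by_cases haa : aa T v k = aa T v l
    · -- same depth, equal a-values: must be same node and slot, hence k = l
      have hmeq : (grp T v k).2 = (grp T v l).2 := by
        rcases lt_trichotomy (grp T v k).2 (grp T v l).2 with hm | hm | hm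
        · exact absurd haa (aa_lt_of_m_lt hT hv hd hm).ne
        · exact hm
        · exact absurd haa.symm (aa_lt_of_m_lt hT hv hd.symm hm).ne
      have hgeq : grp T v k = grp T v l := Prod.ext hd hmeq
      have hper : per T v k = per T v l := by unfold per; rw [hgeq]
      have hoo : oo T v k = oo T v l := by rw [← hk, ← hl, hper]
      unfold oo at hoo
      rw [hgeq, haa] at hoo
      have hii : qq T v k % (grp T v l).2 = qq T v l % (grp T v l).2 :=
        Nat.eq_of_mul_eq_mul_right (pow_pos (by norm_num : (0:ℕ) < 2) _)
          (Nat.add_left_cancel hoo)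
      unfold aa at haa
      rw [hgeq] at haa
      have hjj : qq T v k / (grp T v l).2 = qq T v l / (grp T v l).2 := by omega
      have hqq : qq T v k = qq T v l := by
        conv_lhs => rw [← Nat.div_add_mod (qq T v k) (grp T v l).2]
        conv_rhs => rw [← Nat.div_add_mod (qq T v l) (grp T v l).2]
        rw [hjj, hii]
      exact hne (qq_inj hgeq hqq)
    · have h1 := mem_ap_mod_pow hk
      have h2 := mem_ap_mod_pow hl
      rw [← hd] at h2
      apply haa
      apply rev_inj (grp T v k).1 _ _ (aa_lt hT hv hcap k)
        (by rw [hd]; exact aa_lt hT hv hcap l)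
      rw [← h1, ← h2]
  · exact disj_of_depth_lt hT hv hcap hd hl hk

/-! ### Analytic part -/

lemma geom_tail (G : Finset ℕ) (c : ℝ) (hc : 0 ≤ c)
    (h : ∀ d ∈ G, ((1:ℝ)/2)^d ≤ c) : ∑ d ∈ G, ((1:ℝ)/2)^d ≤ 2 * c := by
  rcases G.eq_empty_or_nonempty with rfl | hG
  · simp; positivity
  · have hmin := G.min'_mem hG
    have hsub : G ⊆ Finset.Ico (G.min' hG) (G.max' hG + 1) := by
      intro d hd
      simp only [Finset.mem_Ico]
      exact ⟨G.min'_le d hd, Nat.lt_succ_of_le (G.le_max' d hd)⟩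
    calc ∑ d ∈ G, ((1:ℝ)/2)^d
        ≤ ∑ d ∈ Finset.Ico (G.min' hG) (G.max' hG + 1), ((1:ℝ)/2)^d :=
          Finset.sum_le_sum_of_subset_of_nonneg hsub (by intros; positivity)
      _ = (((1:ℝ)/2)^(G.max' hG + 1) - ((1:ℝ)/2)^(G.min' hG)) / ((1:ℝ)/2 - 1) :=
          geom_sum_Ico (by norm_num) (Nat.le_succ_of_le (G.min'_le _ (G.max'_mem hG)))
      _ ≤ 2 * ((1:ℝ)/2)^(G.min' hG) := by
          rw [div_le_iff_of_neg (by norm_num)]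
          have hp : (0:ℝ) ≤ ((1:ℝ)/2)^(G.max' hG + 1) := by positivity
          nlinarith
      _ ≤ 2 * c := by
          have := h _ hmin
          linarith

lemma per_pos (hT : 2 ≤ T) (hv : ∀ k, T ≤ v k) (k : Fin n) : 0 < per T v k :=
  Nat.mul_pos (grpm_pos hT hv k) (pow_pos (by norm_num : (0:ℕ) < 2) _)

lemma per_inv_le (hT : 2 ≤ T) (hv : ∀ k, T ≤ v k) (k : Fin n) :
    (1:ℝ) / (per T v k) ≤ (1 + 1/T) * (1 / (v k)) := by
  have hvk := hv k
  have hm : T ≤ (grp T v k).2 := mm_le (hv k)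
  have hlt : v k < ((grp T v k).2 + 1) * 2 ^ (grp T v k).1 := lt_mm_succ
  have h1 : T * v k ≤ (T + 1) * per T v k := by
    have e1 : v k + 1 ≤ per T v k + 2 ^ (grp T v k).1 := by
      have : ((grp T v k).2 + 1) * 2 ^ (grp T v k).1
          = per T v k + 2 ^ (grp T v k).1 := by rw [per, add_mul, one_mul]
      omega
    have e2 : T * 2 ^ (grp T v k).1 ≤ per T v k := by
      rw [per]; exact Nat.mul_le_mul_right _ hm
    calc T * v k ≤ T * (v k + 1) := Nat.mul_le_mul_left _ (Nat.le_succ _)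
      _ ≤ T * (per T v k + 2 ^ (grp T v k).1) := Nat.mul_le_mul_left _ e1
      _ = T * per T v k + T * 2 ^ (grp T v k).1 := by rw [Nat.mul_add]
      _ ≤ T * per T v k + per T v k := Nat.add_le_add_left e2 _
      _ = (T + 1) * per T v k := by ring
  have hT0 : (0:ℝ) < (T:ℝ) := by exact_mod_cast (by omega : 0 < T)
  have hv0 : (0:ℝ) < (v k : ℝ) := by exact_mod_cast (by omega : 0 < v k)
  have hp0 : (0:ℝ) < (per T v k : ℝ) := by
    exact_mod_cast per_pos hT hv k
  have h1' : (T:ℝ) * (v k : ℝ) ≤ ((T:ℝ) + 1) * (per T v k : ℝ) := by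
    exact_mod_cast h1
  rw [mul_one_div, div_le_div_iff₀ hp0 hv0, one_mul]
  have h2 : (1 + 1/(T:ℝ)) * (per T v k : ℝ) = (((T:ℝ)+1) * (per T v k : ℝ))/(T:ℝ) := by
    field_simp
  rw [h2, le_div_iff₀ hT0]
  nlinarith

lemma nu_cast_le (p : ℕ × ℕ) (hp : 2 ≤ p.2) :
    (nu T v p : ℝ) ≤ (cnt T v p : ℝ)/(p.2 : ℝ) + (if cnt T v p = 0 then 0 else 1) := by
  by_cases h : cnt T v p = 0
  · have : nu T v p = 0 := by
      rw [nu, h, zero_add]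
      exact Nat.div_eq_of_lt (by omega)
    rw [this, h]
    simp
  · have h1 : (nu T v p : ℝ) ≤ ((cnt T v p + p.2 - 1 : ℕ) : ℝ) / (p.2 : ℝ) :=
      Nat.cast_div_le
    have hc1 : 1 ≤ cnt T v p := Nat.one_le_iff_ne_zero.2 h
    have h2 : ((cnt T v p + p.2 - 1 : ℕ) : ℝ) = (cnt T v p : ℝ) + (p.2 : ℝ) - 1 := by
      have : 1 ≤ cnt T v p + p.2 := by omega
      push_cast [Nat.cast_sub this]
      ring
    have hp0 : (0:ℝ) < (p.2 : ℝ) := by exact_mod_cast (by omega : 0 < p.2)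
    rw [if_neg h]
    rw [nu] at h1
    calc (nu T v p : ℝ) ≤ ((cnt T v p + p.2 - 1 : ℕ) : ℝ) / (p.2 : ℝ) := by
          rw [nu]; exact h1
      _ = ((cnt T v p : ℝ) + ((p.2 : ℝ) - 1)) / (p.2 : ℝ) := by rw [h2]; ring_nf
      _ = (cnt T v p : ℝ)/(p.2:ℝ) + ((p.2:ℝ) - 1)/(p.2:ℝ) := add_div _ _ _
      _ ≤ (cnt T v p : ℝ)/(p.2:ℝ) + 1 := by
          have : ((p.2:ℝ) - 1)/(p.2:ℝ) ≤ 1 := by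
            rw [div_le_one hp0]; linarith
          linarith

lemma cnt_zero_of_not_mem (p : ℕ × ℕ) (hp : p ∉ Finset.univ.image (grp T v)) :
    cnt T v p = 0 := by
  rw [cnt, Finset.card_eq_zero, Finset.filter_eq_empty_iff]
  intro k _
  intro hc
  exact hp (Finset.mem_image.2 ⟨k, Finset.mem_univ k, hc⟩)

lemma grp_mem_box (hT : 2 ≤ T) (hv : ∀ k, T ≤ v k) (k : Fin n) :
    (grp T v k).2 ∈ Finset.Ico T (2*T) :=
  Finset.mem_Ico.2 ⟨mm_le (hv k), mm_lt (by omega) (hv k)⟩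

lemma pow_small_of_cnt_ne (hT : 2 ≤ T) (hv8 : ∀ k, 8*T^3 ≤ v k) {p : ℕ × ℕ}
    (hp2 : p.2 < 2*T) (hc : cnt T v p ≠ 0) : ((1:ℝ)/2)^p.1 ≤ 1/(4*(T:ℝ)^2) := by
  obtain ⟨k, hk⟩ := Finset.card_pos.mp (Nat.pos_of_ne_zero hc)
  rw [Finset.mem_filter] at hk
  have hk2 : grp T v k = p := hk.2
  have h1 : v k < (p.2 + 1) * 2 ^ p.1 := by
    rw [← hk2]; exact lt_mm_succ
  have h2 : 8*T^3 ≤ v k := hv8 k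
  have h3 : 4*T^2 < 2 ^ p.1 := by
    have h4 : 2*T*(4*T^2) < 2*T*2 ^ p.1 := by
      calc 2*T*(4*T^2) = 8*T^3 := by ring
        _ ≤ v k := h2
        _ < (p.2+1)*2 ^ p.1 := h1
        _ ≤ 2*T*2 ^ p.1 := Nat.mul_le_mul_right _ (by omega)
    exact Nat.lt_of_mul_lt_mul_left h4
  have hcast : (4*(T:ℝ)^2) ≤ (2:ℝ)^p.1 := by exact_mod_cast h3.le
  have hT0 : (0:ℝ) < 4*(T:ℝ)^2 := by
    have : (0:ℝ) < (T:ℝ) := by exact_mod_cast (by omega : 0 < T)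
    positivity
  rw [one_div_pow]
  exact one_div_le_one_div_of_le hT0 hcast

/-- lemma `T ≤ 8T³`. -/
lemma T_le_N (hT : 2 ≤ T) : T ≤ 8*T^3 := by
  have h1 : 1 ≤ T^2 := Nat.one_le_pow _ _ (by omega)
  have h2 : 1 ≤ 8*T^2 := by omega
  calc T = 1 * T := (one_mul T).symm
    _ ≤ 8*T^2*T := Nat.mul_le_mul_right T h2
    _ = 8*T^3 := by ring

lemma sum_nud_le (hT : 2 ≤ T) (hv8 : ∀ k, 8*T^3 ≤ v k) {ε : ℝ}
    (hTe : 2/(T:ℝ) ≤ ε)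
    (hsum : ∑ k, (1:ℝ)/(v k : ℝ) ≤ 1 - ε) (F : Finset ℕ) :
    ∑ d ∈ F, (nud T v d : ℝ) * ((1:ℝ)/2)^d ≤ 1 := by
  classical
  have hv : ∀ k, T ≤ v k := fun k => le_trans (T_le_N hT) (hv8 k)
  have hT0 : (0:ℝ) < (T:ℝ) := by exact_mod_cast (by omega : 0 < T)
  set B := Finset.Ico T (2*T) with hB
  set w : ℕ × ℕ → ℝ := fun p => 1/(p.2:ℝ) * ((1:ℝ)/2)^p.1 with hw
  have hwnn : ∀ p, 0 ≤ w p := by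
    intro p; rw [hw]; positivity
  have step1 : ∑ d ∈ F, (nud T v d : ℝ) * ((1:ℝ)/2)^d
      = ∑ p ∈ F ×ˢ B, (nu T v p : ℝ) * ((1:ℝ)/2)^p.1 := by
    rw [Finset.sum_product]
    apply Finset.sum_congr rfl
    intro d _
    rw [nud]
    push_cast
    rw [Finset.sum_mul]
  have step2 : ∀ p ∈ F ×ˢ B, (nu T v p : ℝ) * ((1:ℝ)/2)^p.1
      ≤ (cnt T v p : ℝ) * w p
        + (if cnt T v p = 0 then (0:ℝ) else 1) * ((1:ℝ)/2)^p.1 := by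
    intro p hp
    have hwp : (cnt T v p : ℝ) * w p = ((cnt T v p : ℝ)/(p.2:ℝ)) * ((1:ℝ)/2)^p.1 := by
      rw [hw]; ring
    rw [hwp, ← add_mul]
    apply mul_le_mul_of_nonneg_right _ (by positivity)
    apply nu_cast_le
    have := (Finset.mem_product.1 hp).2
    rw [hB, Finset.mem_Ico] at this
    omega
  -- Part A
  have hzero : ∀ p ∈ F ×ˢ B, p ∉ (F ×ˢ B) ∩ (Finset.univ.image (grp T v)) →
      (cnt T v p : ℝ) * w p = 0 := by
    intro p hp hnp
    have : p ∉ Finset.univ.image (grp T v) := by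
      intro hmem
      exact hnp (Finset.mem_inter.2 ⟨hp, hmem⟩)
    rw [cnt_zero_of_not_mem _ this]
    simp
  have partA : ∑ p ∈ F ×ˢ B, (cnt T v p : ℝ) * w p ≤ (1 + 1/(T:ℝ)) * (1 - ε) := by
    have e1 : ∑ p ∈ F ×ˢ B, (cnt T v p : ℝ) * w p
        = ∑ p ∈ (F ×ˢ B) ∩ (Finset.univ.image (grp T v)), (cnt T v p : ℝ) * w p :=
      (Finset.sum_subset Finset.inter_subset_left hzero).symm
    have e2 : ∑ p ∈ (F ×ˢ B) ∩ (Finset.univ.image (grp T v)), (cnt T v p : ℝ) * w p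
        ≤ ∑ p ∈ Finset.univ.image (grp T v), (cnt T v p : ℝ) * w p := by
      apply Finset.sum_le_sum_of_subset_of_nonneg Finset.inter_subset_right
      intro p _ _
      exact mul_nonneg (Nat.cast_nonneg _) (hwnn p)
    have e3 : ∑ p ∈ Finset.univ.image (grp T v), (cnt T v p : ℝ) * w p
        = ∑ k, w (grp T v k) := by
      rw [Finset.sum_comp w (grp T v)]
      apply Finset.sum_congr rfl
      intro p _
      rw [nsmul_eq_mul, cnt]
    have e4 : ∑ k, w (grp T v k) ≤ (1 + 1/(T:ℝ)) * (1 - ε) := by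
      have e5 : ∀ k, w (grp T v k) = 1/(per T v k : ℝ) := by
        intro k
        rw [hw]
        simp only []
        rw [one_div_pow, div_mul_div_comm, one_mul, per]
        push_cast
        ring_nf
      calc ∑ k, w (grp T v k) = ∑ k, 1/(per T v k : ℝ) := by
            apply Finset.sum_congr rfl; intro k _; exact e5 k
        _ ≤ ∑ k, (1 + 1/(T:ℝ)) * (1/(v k : ℝ)) :=
            Finset.sum_le_sum (fun k _ => per_inv_le hT hv k)
        _ = (1 + 1/(T:ℝ)) * ∑ k, 1/(v k : ℝ) := by rw [Finset.mul_sum]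
        _ ≤ (1 + 1/(T:ℝ)) * (1 - ε) := by
            apply mul_le_mul_of_nonneg_left hsum
            positivity
    calc ∑ p ∈ F ×ˢ B, (cnt T v p : ℝ) * w p
        = ∑ p ∈ (F ×ˢ B) ∩ (Finset.univ.image (grp T v)), (cnt T v p : ℝ) * w p := e1
      _ ≤ ∑ p ∈ Finset.univ.image (grp T v), (cnt T v p : ℝ) * w p := e2
      _ = ∑ k, w (grp T v k) := e3
      _ ≤ (1 + 1/(T:ℝ)) * (1 - ε) := e4
  -- Part B
  have partB : ∑ p ∈ F ×ˢ B, (if cnt T v p = 0 then (0:ℝ) else 1) * ((1:ℝ)/2)^p.1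
      ≤ (T:ℝ) * (2 * (1/(4*(T:ℝ)^2))) := by
    have e1 : ∑ p ∈ F ×ˢ B, (if cnt T v p = 0 then (0:ℝ) else 1) * ((1:ℝ)/2)^p.1
        = ∑ m ∈ B, ∑ d ∈ F, (if cnt T v (d, m) = 0 then (0:ℝ) else 1) * ((1:ℝ)/2)^d := by
      rw [Finset.sum_product]
      rw [Finset.sum_comm]
    rw [e1]
    have e2 : ∀ m ∈ B, ∑ d ∈ F, (if cnt T v (d, m) = 0 then (0:ℝ) else 1) * ((1:ℝ)/2)^d
        ≤ 2 * (1/(4*(T:ℝ)^2)) := by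
      intro m hm
      have e3 : ∑ d ∈ F, (if cnt T v (d, m) = 0 then (0:ℝ) else 1) * ((1:ℝ)/2)^d
          = ∑ d ∈ F.filter (fun d => ¬ (cnt T v (d, m) = 0)), ((1:ℝ)/2)^d := by
        rw [Finset.sum_filter]
        apply Finset.sum_congr rfl
        intro d _
        split_ifs with h
        · simp [h]
        · simp [h]
      rw [e3]
      apply geom_tail _ _ (by positivity)
      intro d hd
      rw [Finset.mem_filter] at hd
      apply pow_small_of_cnt_ne hT hv8 (p := (d, m)) _ hd.2
      have := Finset.mem_Ico.1 (hB ▸ hm)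
      exact this.2
    calc ∑ m ∈ B, ∑ d ∈ F, (if cnt T v (d, m) = 0 then (0:ℝ) else 1) * ((1:ℝ)/2)^d
        ≤ ∑ m ∈ B, 2 * (1/(4*(T:ℝ)^2)) := Finset.sum_le_sum e2
      _ = (B.card : ℝ) * (2 * (1/(4*(T:ℝ)^2))) := by rw [Finset.sum_const, nsmul_eq_mul]
      _ = (T:ℝ) * (2 * (1/(4*(T:ℝ)^2))) := by
          rw [hB, Nat.card_Ico]
          congr 1
          have : 2*T - T = T := by omega
          rw [this]
  -- numeric finish
  have hnum : (1 + 1/(T:ℝ)) * (1 - ε) + (T:ℝ) * (2 * (1/(4*(T:ℝ)^2))) ≤ 1 := by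
    have hu : (T:ℝ) * (2 * (1/(4*(T:ℝ)^2))) = 1/(2*(T:ℝ)) := by
      field_simp
      ring
    rw [hu]
    have hu0 : (0:ℝ) < 1/(T:ℝ) := by positivity
    have hT2 : (2:ℝ) ≤ (T:ℝ) := by exact_mod_cast hT
    have he0 : 0 < ε := lt_of_lt_of_le (by positivity) hTe
    have h12 : 1/(2*(T:ℝ)) = (1/(T:ℝ))/2 := by ring
    rw [h12]
    have hTe' : 2*(1/(T:ℝ)) ≤ ε := by
      calc 2*(1/(T:ℝ)) = 2/(T:ℝ) := by ring
        _ ≤ ε := hTe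
    nlinarith [mul_nonneg (le_of_lt hu0) (le_of_lt he0), hTe', hu0]
  calc ∑ d ∈ F, (nud T v d : ℝ) * ((1:ℝ)/2)^d
      = ∑ p ∈ F ×ˢ B, (nu T v p : ℝ) * ((1:ℝ)/2)^p.1 := step1
    _ ≤ ∑ p ∈ F ×ˢ B, ((cnt T v p : ℝ) * w p
          + (if cnt T v p = 0 then (0:ℝ) else 1) * ((1:ℝ)/2)^p.1) :=
        Finset.sum_le_sum step2
    _ = (∑ p ∈ F ×ˢ B, (cnt T v p : ℝ) * w p)
          + ∑ p ∈ F ×ˢ B, (if cnt T v p = 0 then (0:ℝ) else 1) * ((1:ℝ)/2)^p.1 :=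
        Finset.sum_add_distrib
    _ ≤ (1 + 1/(T:ℝ)) * (1 - ε) + (T:ℝ) * (2 * (1/(4*(T:ℝ)^2))) := add_le_add partA partB
    _ ≤ 1 := hnum

lemma cap_of (hT : 2 ≤ T) (hv8 : ∀ k, 8*T^3 ≤ v k) {ε : ℝ}
    (hTe : 2/(T:ℝ) ≤ ε)
    (hsum : ∑ k, (1:ℝ)/(v k : ℝ) ≤ 1 - ε) :
    ∀ dd, Pd T v dd + nud T v dd ≤ 2 ^ dd := by
  intro dd
  have master := sum_nud_le hT hv8 hTe hsum (Finset.range (dd+1))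
  rw [← Nat.cast_le (α := ℝ)]
  have cast1 : ((Pd T v dd + nud T v dd : ℕ) : ℝ)
      = ∑ d' ∈ Finset.range (dd+1), (nud T v d' : ℝ) * (2:ℝ)^(dd - d') := by
    rw [Finset.sum_range_succ, Nat.sub_self, pow_zero, mul_one, Pd]
    push_cast
    ring
  have key : ∀ d' ∈ Finset.range (dd+1),
      (nud T v d' : ℝ) * (2:ℝ)^(dd - d') = (2:ℝ)^dd * ((nud T v d' : ℝ) * ((1:ℝ)/2)^d') := by
    intro d' hd'
    have hd'' : d' ≤ dd := by
      have := Finset.mem_range.1 hd'; omega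
    have hpow : (2:ℝ)^(dd - d') * (2:ℝ)^d' = (2:ℝ)^dd := by
      rw [← pow_add]; congr 1; omega
    have h2 : ((1:ℝ)/2)^d' = 1/(2:ℝ)^d' := one_div_pow 2 d'
    rw [h2]
    have hp0 : (0:ℝ) < (2:ℝ)^d' := by positivity
    field_simp
    nlinarith [hpow]
  calc ((Pd T v dd + nud T v dd : ℕ) : ℝ)
      = ∑ d' ∈ Finset.range (dd+1), (nud T v d' : ℝ) * (2:ℝ)^(dd - d') := cast1
    _ = ∑ d' ∈ Finset.range (dd+1), (2:ℝ)^dd * ((nud T v d' : ℝ) * ((1:ℝ)/2)^d') :=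
        Finset.sum_congr rfl key
    _ = (2:ℝ)^dd * ∑ d' ∈ Finset.range (dd+1), (nud T v d' : ℝ) * ((1:ℝ)/2)^d' := by
        rw [Finset.mul_sum]
    _ ≤ (2:ℝ)^dd * 1 := by
        apply mul_le_mul_of_nonneg_left master (by positivity)
    _ = ((2^dd : ℕ) : ℝ) := by push_cast; ring

lemma per_le_v (k : Fin n) : per T v k ≤ v k := mm_mul_le

end Main
end PinwheelProof

open PinwheelProof in
/-- **Theorem (Pinwheel schedulability threshold).** For every `ε > 0` there exists `N ∈ ℕ` such
that every (nonempty) vector `v = (v 1, …, v n)` of integers with all entries at least `N` and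
density `∑ k, 1 / v k < 1 − ε` admits a Pinwheel schedule: a sequence `s : ℕ → Fin n` such that
for every index `k` every window of `v k` consecutive positions contains an occurrence of `k`. -/
theorem pinwheel_density_threshold (ε : ℝ) (hε : 0 < ε) :
    ∃ N : ℕ, ∀ (n : ℕ), 0 < n → ∀ v : Fin n → ℕ,
      (∀ k, N ≤ v k) → (∑ k, (1 : ℝ) / (v k : ℝ)) < 1 - ε →
      ∃ s : ℕ → Fin n, ∀ (k : Fin n) (j : ℕ), ∃ i : ℕ, j ≤ i ∧ i < j + v k ∧ s i = k := by
  classical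
  set T : ℕ := ⌈2/ε⌉₊ + 2 with hTdef
  have hT : 2 ≤ T := by omega
  have hT0 : (0:ℝ) < (T:ℝ) := by exact_mod_cast (by omega : 0 < T)
  have hTe : 2/(T:ℝ) ≤ ε := by
    rw [div_le_iff₀ hT0]
    have h1 : (2/ε : ℝ) ≤ (⌈2/ε⌉₊ : ℝ) := Nat.le_ceil _
    have h2 : ((⌈2/ε⌉₊ : ℕ) : ℝ) ≤ (T:ℝ) := by
      rw [hTdef]; push_cast; linarith
    have h3 : (2/ε : ℝ) ≤ (T:ℝ) := le_trans h1 h2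
    calc (2:ℝ) = ε * (2/ε) := by field_simp
      _ ≤ ε * (T:ℝ) := by apply mul_le_mul_of_nonneg_left h3 (le_of_lt hε)
  refine ⟨8*T^3, ?_⟩
  intro n hn v hv8 hsumlt
  have hsum : ∑ k, (1:ℝ)/(v k : ℝ) ≤ 1 - ε := le_of_lt hsumlt
  have hv : ∀ k, T ≤ v k := fun k => le_trans (T_le_N hT) (hv8 k)
  have hcap := cap_of hT hv8 hTe hsum
  refine ⟨fun x => if h : ∃ k' : Fin n, x % per T v k' = oo T v k' then h.choose else ⟨0, hn⟩, ?_⟩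
  intro k j
  have hP : 0 < per T v k := per_pos hT hv k
  have hoP : oo T v k < per T v k := oo_lt_per hT hv k
  have hPv : per T v k ≤ v k := per_le_v k
  set P := per T v k with hPdef
  set o := oo T v k with hodef
  set t := ((j - o) + P - 1)/P with htdef
  refine ⟨o + t * P, ?_, ?_, ?_⟩
  · -- j ≤ i
    rcases le_or_gt j o with hj | hj
    · exact le_trans hj (Nat.le_add_right _ _)
    · have h1 : j - o ≤ t * P := le_ceil_mul hP
      omega
  · -- i < j + v k
    rcases le_or_gt j o with hj | hj
    · have : t = 0 := by
        rw [htdef]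
        have : j - o = 0 := by omega
        rw [this, zero_add]
        exact Nat.div_eq_of_lt (by omega)
      rw [this, zero_mul, add_zero]
      omega
    · have h2 : t * P ≤ (j - o) + P - 1 := Nat.div_mul_le_self _ _
      omega
  · -- s i = k
    have him : (o + t * P) % P = o := by
      rw [Nat.add_mul_mod_self_right, Nat.mod_eq_of_lt hoP]
    have hex : ∃ k' : Fin n, (o + t * P) % per T v k' = oo T v k' := ⟨k, him⟩
    show (if h : ∃ k' : Fin n, (o + t * P) % per T v k' = oo T v k'
        then h.choose else (⟨0, hn⟩ : Fin n)) = k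
    rw [dif_pos hex]
    by_contra hne
    exact disj hT hv hcap hne hex.choose_spec him
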